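/- For the problem (QD2) with g(π) = 1-π₁π₂ and h(π) = cπ₁π₂: let u₂ be the value function of the one-dimensional detection problem QD(μ₂,λ₂,c) with continuation region [0,B₂*), and define H(π₁,π₂) = π₁u₂(π₂) + 1 - π₁. Then H = g on {π₂ ≥ B₂*}, and LH + cπ₁π₂ = -(1 - u₂(π₂))λ₁(1-π₁) ≤ 0 on [0,1]×[0,B₂*), where L is the generator L = Σ_i [½μ_i²π_i²(1-π_i)²∂²_{π_i} + λ_i(1-π_i)∂_{π_i}]. -/
import Mathlib


open Set

/-- for (QD2), with u₂ the value function of QD(μ₂,λ₂,c) (concave,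
non-increasing, ≤ 1, equal to 1-y on [B₂*,1], solving the free-boundary ODE on
[0,B₂*)), the function H(x,y) = x·u₂(y) + 1 - x satisfies H = g = 1 - xy on
{y ≥ B₂*}, and LH + cxy = -(1-u₂(y))λ₁(1-x) ≤ 0 on [0,1]×[0,B₂*), where L is the
generator Σᵢ [½μᵢ²πᵢ²(1-πᵢ)²∂²ᵢ + λᵢ(1-πᵢ)∂ᵢ]. -/
theorem stmt18 (c lam₁ lam₂ mu₁ mu₂ B₂ : ℝ)
    (hc : 0 < c) (hlam₁ : 0 < lam₁) (hlam₂ : 0 < lam₂)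
    (hB₂ : B₂ ∈ Set.Ioo (0:ℝ) 1)
    (u₂ : ℝ → ℝ)
    (hconc : ConcaveOn ℝ (Set.Icc (0:ℝ) 1) u₂)
    (hanti : AntitoneOn u₂ (Set.Icc (0:ℝ) 1))
    (hle1 : ∀ y ∈ Set.Icc (0:ℝ) 1, u₂ y ≤ 1)
    (hstop : ∀ y ∈ Set.Icc B₂ 1, u₂ y = 1 - y)
    (hdiff : ∀ y ∈ Set.Ico (0:ℝ) B₂,
      DifferentiableAt ℝ u₂ y ∧ DifferentiableAt ℝ (deriv u₂) y)
    (hODE : ∀ y ∈ Set.Ico (0:ℝ) B₂,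
      (1/2) * mu₂ ^ 2 * y ^ 2 * (1 - y) ^ 2 * deriv (deriv u₂) y
        + lam₂ * (1 - y) * deriv u₂ y + c * y = 0)
    (H : ℝ → ℝ → ℝ) (hH : ∀ x y, H x y = x * u₂ y + 1 - x) :
    (∀ x ∈ Set.Icc (0:ℝ) 1, ∀ y ∈ Set.Icc B₂ 1, H x y = 1 - x * y) ∧
    (∀ x ∈ Set.Icc (0:ℝ) 1, ∀ y ∈ Set.Ico (0:ℝ) B₂,
      ((1/2) * mu₁ ^ 2 * x ^ 2 * (1 - x) ^ 2 * deriv (deriv (fun x' => H x' y)) x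
        + lam₁ * (1 - x) * deriv (fun x' => H x' y) x
        + (1/2) * mu₂ ^ 2 * y ^ 2 * (1 - y) ^ 2 * deriv (deriv (H x)) y
        + lam₂ * (1 - y) * deriv (H x) y) + c * x * y
        = -(1 - u₂ y) * lam₁ * (1 - x) ∧
      -(1 - u₂ y) * lam₁ * (1 - x) ≤ 0) := by
  constructor
  · intro x hx y hy
    rw [hH, hstop y hy]; ring
  · intro x hx y hy
    have hyI : y ∈ Set.Icc (0:ℝ) 1 := ⟨hy.1, le_of_lt (lt_of_lt_of_le hy.2 hB₂.2.le)⟩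
    have hxfun : (fun x' => H x' y) = fun x' => (u₂ y - 1) * x' + 1 :=
      funext fun x' => by rw [hH]; ring
    have hd1x : deriv (fun x' => H x' y) = fun _ => u₂ y - 1 := by
      rw [hxfun]
      funext x'
      rw [deriv_add_const, deriv_const_mul_field]
      simp
    have hd2x : deriv (deriv (fun x' => H x' y)) x = 0 := by
      rw [hd1x]; simp
    have hyfun : H x = fun y' => x * u₂ y' + (1 - x) :=
      funext fun y' => by rw [hH]; ring
    have hd1y : deriv (H x) = fun y' => x * deriv u₂ y' := by
      rw [hyfun]
      funext y'
      rw [deriv_add_const, deriv_const_mul_field]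
    have hd2y : deriv (deriv (H x)) y = x * deriv (deriv u₂) y := by
      rw [hd1y, deriv_const_mul_field]
    have hode := hODE y hy
    constructor
    · rw [hd2x, hd1x, hd2y, hd1y]
      have : x * ((1/2) * mu₂ ^ 2 * y ^ 2 * (1 - y) ^ 2 * deriv (deriv u₂) y
        + lam₂ * (1 - y) * deriv u₂ y + c * y) = 0 := by rw [hode]; ring
      nlinarith [this]
    · have h1 : u₂ y ≤ 1 := hle1 y hyI
      have h2 : (0:ℝ) ≤ 1 - x := by linarith [hx.2]
      nlinarith [mul_nonneg (mul_nonneg (by linarith : (0:ℝ) ≤ 1 - u₂ y) hlam₁.le) h2]
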